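/- (Padding with ones T3.) Let k ≥ 2, m, n ∈ 2ℕ, let r_1,…,r_n, c_1,…,c_m ∈ ℕ₀ with r_j ≤ m and c_i ≤ n, and for each (i,j) ∈ C(m,n,2) let ∼_{i,j} ∈ {≤, ≥, =} be a relation and v(i,j) ∈ ℕ₀. Set m' := mk/2 and n' := nk/2. Define r'_1,…,r'_{n'} by r'_{(k/2)(j−1)+1} := r_j + (m'−m) and r'_{(k/2)(j−1)+2} := r_{j+1} + (m'−m) for each odd j ∈ [n], and r'_s := m' for all remaining indices s ∈ [n'] (the added rows are filled entirely with ones); define c'_1,…,c'_{m'} analogously from c with n'−n in place of m'−m and filler value n'. Put v'(i,j) := v(i,j) + k² − 4 for every (i,j) ∈ C(m,n,2). Then there exists a binary matrix ξ on [m]×[n] with row sums r, column sums c, and Σ_{(p,q)∈B_2(i,j)} ξ_{p,q} ∼_{i,j} v(i,j) for all (i,j) ∈ C(m,n,2), if and only if there exists a binary matrix ξ' on [m']×[n'] with row sums r', column sums c', and Σ_{(p,q)∈B_k(i',j')} ξ'_{p,q} ∼_{i,j} v'(i,j) for all (i,j) ∈ C(m,n,2), where (i',j') := ((k/2)(i−1)+1,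 (k/2)(j−1)+1). -/

import Mathlib

open scoped Classical

/-- The grid `[m] × [n] = {1,…,m} × {1,…,n}`. -/
def gridIcc (m n : ℕ) : Finset (ℕ × ℕ) := Finset.Icc 1 m ×ˢ Finset.Icc 1 n

/-- The corner points `C(m,n,k) = ([m] × [n]) ∩ (kℕ₀+1)²`. -/
def cornerPts (m n k : ℕ) : Finset (ℕ × ℕ) :=
  (gridIcc m n).filter fun p => p.1 % k = 1 % k ∧ p.2 % k = 1 % k

/-- The block `B_k(i,j) = {(i+a, j+b) : a, b ∈ [k-1]₀}`. -/
def blockF (k i j : ℕ) : Finset (ℕ × ℕ) :=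
  Finset.Icc i (i + k - 1) ×ˢ Finset.Icc j (j + k - 1)

/-- A comparison relation `∼ ∈ {≤, ≥, =}`. -/
inductive CmpRel : Type
  | le : CmpRel
  | ge : CmpRel
  | eq : CmpRel

/-- The relation `a ∼ b`. -/
def CmpRel.holds : CmpRel → ℕ → ℕ → Prop
  | .le, a, b => a ≤ b
  | .ge, a, b => a ≥ b
  | .eq, a, b => a = b

/-- One-padded measurements (T3): the index `s = (k/2)(j−1) + 1 + l` with `j` odd and
`l ∈ [k-1]₀` gets the value `r j + pad` if `l = 0`, `r (j+1) + pad` if `l = 1`, and the filler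
value `fill` otherwise. -/
def pad1 (k pad fill : ℕ) (r : ℕ → ℕ) (s : ℕ) : ℕ :=
  if (s - 1) % k = 0 then r (2 * ((s - 1) / k) + 1) + pad
  else if (s - 1) % k = 1 then r (2 * ((s - 1) / k) + 2) + pad
  else fill

/-- The corner map `(i,j) ↦ (i',j') = ((k/2)(i−1)+1, (k/2)(j−1)+1)`. -/
def cornerMap (k : ℕ) (w : ℕ × ℕ) : ℕ × ℕ :=
  (k * (w.1 - 1) / 2 + 1, k * (w.2 - 1) / 2 + 1)

/-! ### Auxiliary lemmas -/

lemma sum_range_mul' (t k : ℕ) (f : ℕ → ℕ) :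
    ∑ x ∈ Finset.range (t*k), f x = ∑ a ∈ Finset.range t, ∑ l ∈ Finset.range k, f (k*a+l) := by
  induction t with
  | zero => simp
  | succ t ih =>
    rw [Finset.sum_range_succ, ← ih, Nat.succ_mul, Finset.sum_range_add]
    congr 1
    exact Finset.sum_congr rfl fun l _ => by rw [Nat.mul_comm]

lemma sum_Icc_mul (t k : ℕ) (f : ℕ → ℕ) :
    ∑ p ∈ Finset.Icc 1 (t*k), f p = ∑ a ∈ Finset.range t, ∑ l ∈ Finset.range k, f (k*a+1+l) := by
  rw [← Finset.Ico_add_one_right_eq_Icc, Finset.sum_Ico_eq_sum_range,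
    show t*k+1-1 = t*k from by omega, sum_range_mul' t k (fun x => f (1+x))]
  exact Finset.sum_congr rfl fun a _ => Finset.sum_congr rfl fun l _ => by congr 1; omega

lemma sum_Icc_len (i k : ℕ) (hk : 1 ≤ k) (f : ℕ → ℕ) :
    ∑ p ∈ Finset.Icc i (i+k-1), f p = ∑ x ∈ Finset.range k, f (i+x) := by
  rw [← Finset.Ico_add_one_right_eq_Icc, Finset.sum_Ico_eq_sum_range,
    show i+k-1+1-i = k from by omega]

lemma sum_split_tail_c (k cst : ℕ) (hk : 2 ≤ k) (h : ℕ → ℕ)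
    (h2 : ∀ x, 2 ≤ x → x < k → h x = cst) :
    ∑ x ∈ Finset.range k, h x = h 0 + h 1 + (k-2)*cst := by
  obtain ⟨d, rfl⟩ : ∃ d, k = 2 + d := ⟨k-2, by omega⟩
  rw [Finset.sum_range_add]
  have h1 : ∑ l ∈ Finset.range 2, h l = h 0 + h 1 := by
    simp [Finset.sum_range_succ]
  have h3 : ∑ x ∈ Finset.range d, h (2+x) = d * cst := by
    rw [Finset.sum_congr rfl (fun x hx => h2 (2+x) (by omega)
      (by simp only [Finset.mem_range] at hx; omega))]
    simp [mul_comm]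
  rw [h1, h3]
  have : 2 + d - 2 = d := by omega
  rw [this]

lemma all_one {α : Type*} (S : Finset α) (f : α → ℕ) (hb : ∀ i ∈ S, f i ≤ 1)
    (hs : ∑ i ∈ S, f i = S.card) : ∀ i ∈ S, f i = 1 := by
  intro i hi
  by_contra hne
  have h0 : f i = 0 := by have := hb i hi; omega
  have hlt : ∑ j ∈ S, f j < ∑ _j ∈ S, 1 :=
    Finset.sum_lt_sum hb ⟨i, hi, by omega⟩
  simp only [Finset.sum_const, smul_eq_mul, mul_one] at hlt
  omega

lemma md1' (k a l : ℕ) (hl : l < k) : (k*a+1+l-1) % k = l := by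
  have h : k*a+1+l-1 = k*a+l := by omega
  rw [h, Nat.mul_add_mod, Nat.mod_eq_of_lt hl]

lemma dv1' (k a l : ℕ) (hl : l < k) : (k*a+1+l-1) / k = a := by
  have h0 : 0 < k := by omega
  have h : k*a+1+l-1 = k*a+l := by omega
  rw [h, Nat.mul_add_div h0, Nat.div_eq_of_lt hl, Nat.add_zero]

lemma idx_le (k u a l : ℕ) (ha : a < u) (hl : l < k) : k*a+1+l ≤ u*k := by
  have ha' : a + 1 ≤ u := ha
  have h1 : k*(a+1) ≤ k*u := Nat.mul_le_mul (le_refl k) ha'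
  have h2 : k*(a+1) = k*a + k := by ring
  have h3 : k*u = u*k := Nat.mul_comm k u
  omega

lemma div_lt' (k u p : ℕ) (h1 : 1 ≤ p) (h2 : p ≤ u*k) : (p-1)/k < u :=
  Nat.div_lt_of_lt_mul (by have := Nat.mul_comm u k; omega)

lemma key4 (k : ℕ) (hk : 2 ≤ k) : (k-2) + (k-2) + (k-2)*k = k^2 - 4 := by
  obtain ⟨d, rfl⟩ : ∃ d, k = 2 + d := ⟨k-2, by omega⟩
  have e1 : (2+d)^2 = d*d + 4*d + 4 := by ring
  have e2 : 2 + d - 2 = d := by omega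
  have e3 : d*(2+d) = d*d + 2*d := by ring
  rw [e1, e2, e3]
  omega

lemma pad1_fill (k P F : ℕ) (r : ℕ → ℕ) (s : ℕ) (h : 2 ≤ (s-1)%k) :
    pad1 k P F r s = F := by
  rw [pad1, if_neg (by omega), if_neg (by omega)]

lemma pad1_le (k P F : ℕ) (r : ℕ → ℕ) (s : ℕ) (h : (s-1)%k ≤ 1) :
    pad1 k P F r s = r (2*((s-1)/k)+1+(s-1)%k) + P := by
  rcases Nat.le_one_iff_eq_zero_or_eq_one.mp h with h0 | h1
  · rw [pad1, if_pos h0, h0, show 2*((s-1)/k)+1+0 = 2*((s-1)/k)+1 from by omega]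
  · rw [pad1, if_neg (by omega), if_pos h1, h1,
      show 2*((s-1)/k)+1+1 = 2*((s-1)/k)+2 from by omega]

/-- The padded matrix for the forward direction. -/
def fwdXi (k : ℕ) (ξ : ℕ × ℕ → ℕ) (z : ℕ × ℕ) : ℕ :=
  if (z.1-1)%k ≤ 1 ∧ (z.2-1)%k ≤ 1 then
    ξ (2*((z.1-1)/k)+1+(z.1-1)%k, 2*((z.2-1)/k)+1+(z.2-1)%k) else 1

/-- The restricted matrix for the backward direction. -/
def bwdXi (k : ℕ) (ξ' : ℕ × ℕ → ℕ) (z : ℕ × ℕ) : ℕ :=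
  ξ' (k*((z.1-1)/2)+1+(z.1-1)%2, k*((z.2-1)/2)+1+(z.2-1)%2)

lemma fwdXi_eval1 (k : ℕ) (ξ : ℕ×ℕ → ℕ) (a l q : ℕ) (hl : l < k) :
    fwdXi k ξ (k*a+1+l, q) =
      if l ≤ 1 ∧ (q-1)%k ≤ 1 then ξ (2*a+1+l, 2*((q-1)/k)+1+(q-1)%k) else 1 := by
  show (if (k*a+1+l-1)%k ≤ 1 ∧ (q-1)%k ≤ 1 then
    ξ (2*((k*a+1+l-1)/k)+1+(k*a+1+l-1)%k, 2*((q-1)/k)+1+(q-1)%k) else 1) = _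
  rw [md1' k a l hl, dv1' k a l hl]

lemma fwdXi_eval2 (k : ℕ) (ξ : ℕ×ℕ → ℕ) (p b l : ℕ) (hl : l < k) :
    fwdXi k ξ (p, k*b+1+l) =
      if (p-1)%k ≤ 1 ∧ l ≤ 1 then ξ (2*((p-1)/k)+1+(p-1)%k, 2*b+1+l) else 1 := by
  show (if (p-1)%k ≤ 1 ∧ (k*b+1+l-1)%k ≤ 1 then
    ξ (2*((p-1)/k)+1+(p-1)%k, 2*((k*b+1+l-1)/k)+1+(k*b+1+l-1)%k) else 1) = _
  rw [md1' k b l hl, dv1' k b l hl]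

lemma fwdXi_eval (k : ℕ) (ξ : ℕ×ℕ → ℕ) (a x b y : ℕ) (hx : x < k) (hy : y < k) :
    fwdXi k ξ (k*a+1+x, k*b+1+y) =
      if x ≤ 1 ∧ y ≤ 1 then ξ (2*a+1+x, 2*b+1+y) else 1 := by
  show (if (k*a+1+x-1)%k ≤ 1 ∧ (k*b+1+y-1)%k ≤ 1 then
    ξ (2*((k*a+1+x-1)/k)+1+(k*a+1+x-1)%k, 2*((k*b+1+y-1)/k)+1+(k*b+1+y-1)%k) else 1) = _
  rw [md1' k a x hx, dv1' k a x hx, md1' k b y hy, dv1' k b y hy]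

lemma bwdXi_eval (k : ℕ) (ξ' : ℕ×ℕ → ℕ) (a x b y : ℕ) (hx : x < 2) (hy : y < 2) :
    bwdXi k ξ' (2*a+1+x, 2*b+1+y) = ξ' (k*a+1+x, k*b+1+y) := by
  show ξ' (k*((2*a+1+x-1)/2)+1+(2*a+1+x-1)%2, k*((2*b+1+y-1)/2)+1+(2*b+1+y-1)%2) = _
  rw [md1' 2 a x hx, dv1' 2 a x hx, md1' 2 b y hy, dv1' 2 b y hy]

lemma holds_add (R : CmpRel) (a b c : ℕ) : R.holds (a+c) (b+c) ↔ R.holds a b := by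
  cases R <;> simp only [CmpRel.holds, ge_iff_le] <;> omega

lemma sum_block (k i j : ℕ) (hk : 1 ≤ k) (f : ℕ×ℕ → ℕ) :
    ∑ z ∈ blockF k i j, f z = ∑ x ∈ Finset.range k, ∑ y ∈ Finset.range k, f (i+x, j+y) := by
  rw [blockF, Finset.sum_product, sum_Icc_len i k hk]
  exact Finset.sum_congr rfl fun x _ => sum_Icc_len j k hk _

lemma corner_decomp (m n : ℕ) (wpt : ℕ × ℕ) (hw : wpt ∈ cornerPts m n 2) :
    ∃ a b, wpt = (2*a+1, 2*b+1) ∧ 2*a+1 ≤ m ∧ 2*b+1 ≤ n := by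
  obtain ⟨i, j⟩ := wpt
  simp only [cornerPts, gridIcc, Finset.mem_filter, Finset.mem_product, Finset.mem_Icc] at hw
  obtain ⟨⟨⟨hi1, hi2⟩, hj1, hj2⟩, hio, hjo⟩ := hw
  refine ⟨(i-1)/2, (j-1)/2, ?_, by omega, by omega⟩
  simp only [Prod.mk.injEq]
  omega

lemma cornerMap_eval (k a b : ℕ) : cornerMap k (2*a+1, 2*b+1) = (k*a+1, k*b+1) := by
  show (k*(2*a+1-1)/2+1, k*(2*b+1-1)/2+1) = _
  rw [show 2*a+1-1 = 2*a from by omega, show 2*b+1-1 = 2*b from by omega,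
    show k*(2*a) = 2*(k*a) from by ring, show k*(2*b) = 2*(k*b) from by ring,
    Nat.mul_div_cancel_left _ (by norm_num : 0 < (2:ℕ)),
    Nat.mul_div_cancel_left _ (by norm_num : 0 < (2:ℕ))]

/-- padding with ones T3: the original instance on `[m] × [n]` with `2 × 2` blocks
is solvable iff the one-padded instance on `[m'] × [n']` (`m' = mk/2`, `n' = nk/2`) with `k × k`
blocks and window values `v'(i,j) = v(i,j) + k² − 4` is solvable. -/
theorem stmt8 (k m n : ℕ) (hk : 2 ≤ k)
    (hm : 2 ∣ m) (hm0 : 0 < m) (hn : 2 ∣ n) (hn0 : 0 < n)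
    (r c : ℕ → ℕ)
    (hr : ∀ j ∈ Finset.Icc 1 n, r j ≤ m) (hc : ∀ i ∈ Finset.Icc 1 m, c i ≤ n)
    (rel : ℕ × ℕ → CmpRel) (v : ℕ × ℕ → ℕ) :
    (∃ ξ : ℕ × ℕ → ℕ,
      (∀ p ∈ gridIcc m n, ξ p ≤ 1) ∧
      (∀ q ∈ Finset.Icc 1 n, ∑ p ∈ Finset.Icc 1 m, ξ (p, q) = r q) ∧
      (∀ p ∈ Finset.Icc 1 m, ∑ q ∈ Finset.Icc 1 n, ξ (p, q) = c p) ∧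
      (∀ w ∈ cornerPts m n 2, (rel w).holds (∑ z ∈ blockF 2 w.1 w.2, ξ z) (v w)))
    ↔ (∃ ξ' : ℕ × ℕ → ℕ,
      (∀ p ∈ gridIcc (m * k / 2) (n * k / 2), ξ' p ≤ 1) ∧
      (∀ q ∈ Finset.Icc 1 (n * k / 2),
        ∑ p ∈ Finset.Icc 1 (m * k / 2), ξ' (p, q) = pad1 k (m * k / 2 - m) (m * k / 2) r q) ∧
      (∀ p ∈ Finset.Icc 1 (m * k / 2),
        ∑ q ∈ Finset.Icc 1 (n * k / 2), ξ' (p, q) = pad1 k (n * k / 2 - n) (n * k / 2) c p) ∧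
      (∀ w ∈ cornerPts m n 2, (rel w).holds
        (∑ z ∈ blockF k (cornerMap k w).1 (cornerMap k w).2, ξ' z) (v w + (k ^ 2 - 4)))) := by
  obtain ⟨u, hu⟩ := hm
  obtain ⟨t, ht⟩ := hn
  have hk0 : 1 ≤ k := by omega
  have hm' : m * k / 2 = u * k := by
    rw [hu, mul_assoc, Nat.mul_div_cancel_left _ (by norm_num : 0 < (2:ℕ))]
  have hn' : n * k / 2 = t * k := by
    rw [ht, mul_assoc, Nat.mul_div_cancel_left _ (by norm_num : 0 < (2:ℕ))]
  have hsplitu : u * k = u*(k-2) + 2*u := by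
    calc u*k = u*((k-2)+2) := by rw [show k-2+2 = k from by omega]
    _ = u*(k-2) + u*2 := by ring
    _ = u*(k-2) + 2*u := by ring
  have hsplitt : t * k = t*(k-2) + 2*t := by
    calc t*k = t*((k-2)+2) := by rw [show k-2+2 = k from by omega]
    _ = t*(k-2) + t*2 := by ring
    _ = t*(k-2) + 2*t := by ring
  have hpadm : m * k / 2 - m = u * (k-2) := by rw [hm', hu]; omega
  have hpadn : n * k / 2 - n = t * (k-2) := by rw [hn', ht]; omega
  constructor
  · rintro ⟨ξ, hb, hrow, hcol, hblk⟩
    refine ⟨fwdXi k ξ, ?_, ?_, ?_, ?_⟩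
    · -- bounds
      rintro ⟨p, q⟩ hp
      simp only [gridIcc, Finset.mem_product, Finset.mem_Icc, hm', hn'] at hp
      obtain ⟨⟨hp1, hp2⟩, hq1, hq2⟩ := hp
      show (if (p-1)%k ≤ 1 ∧ (q-1)%k ≤ 1 then
        ξ (2*((p-1)/k)+1+(p-1)%k, 2*((q-1)/k)+1+(q-1)%k) else 1) ≤ 1
      split_ifs with h
      · have d1 : (p-1)/k < u := div_lt' k u p hp1 hp2
        have d2 : (q-1)/k < t := div_lt' k t q hq1 hq2
        apply hb
        exact Finset.mem_product.mpr ⟨Finset.mem_Icc.mpr ⟨by omega, by omega⟩,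
          Finset.mem_Icc.mpr ⟨by omega, by omega⟩⟩
      · exact le_refl 1
    · -- row sums r
      intro q hq
      rw [Finset.mem_Icc, hn'] at hq
      by_cases hlq : (q-1)%k ≤ 1
      · rw [pad1_le k _ _ r q hlq, hpadm, hm', sum_Icc_mul u k]
        have hjq : 2*((q-1)/k)+1+(q-1)%k ∈ Finset.Icc 1 n := by
          have := div_lt' k t q hq.1 hq.2
          rw [Finset.mem_Icc]
          omega
        have hR := hrow _ hjq
        rw [hu, mul_comm 2 u, sum_Icc_mul u 2] at hR
        have inner : ∀ a ∈ Finset.range u, (∑ l ∈ Finset.range k, fwdXi k ξ (k*a+1+l, q))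
            = ξ (2*a+1+0, 2*((q-1)/k)+1+(q-1)%k) + ξ (2*a+1+1, 2*((q-1)/k)+1+(q-1)%k)
              + (k-2)*1 := by
          intro a _
          rw [sum_split_tail_c k 1 hk (fun l => fwdXi k ξ (k*a+1+l, q))
            (fun x h2 hxk => by
              show fwdXi k ξ (k*a+1+x, q) = 1
              rw [fwdXi_eval1 k ξ a x q hxk, if_neg (by omega)])]
          show fwdXi k ξ (k*a+1+0, q) + fwdXi k ξ (k*a+1+1, q) + (k-2)*1 = _
          rw [fwdXi_eval1 k ξ a 0 q (by omega), fwdXi_eval1 k ξ a 1 q (by omega),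
            if_pos ⟨by omega, hlq⟩, if_pos ⟨by omega, hlq⟩]
        rw [Finset.sum_congr rfl inner, Finset.sum_add_distrib, Finset.sum_add_distrib,
          Finset.sum_const, Finset.card_range, smul_eq_mul]
        have hR2 : ∑ a ∈ Finset.range u, (ξ (2*a+1+0, 2*((q-1)/k)+1+(q-1)%k)
            + ξ (2*a+1+1, 2*((q-1)/k)+1+(q-1)%k)) = r (2*((q-1)/k)+1+(q-1)%k) := by
          rw [← hR]
          exact Finset.sum_congr rfl fun a _ => by
            rw [Finset.sum_range_succ, Finset.sum_range_succ, Finset.sum_range_zero, zero_add]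
        rw [Finset.sum_add_distrib] at hR2
        simp only [mul_one]
        omega
      · rw [pad1_fill k _ _ r q (by omega), hm', sum_Icc_mul u k]
        have inner : ∀ a ∈ Finset.range u, (∑ l ∈ Finset.range k, fwdXi k ξ (k*a+1+l, q)) = k := by
          intro a _
          rw [Finset.sum_congr rfl (fun x hx => by
            rw [fwdXi_eval1 k ξ a x q (Finset.mem_range.mp hx), if_neg (by omega)])]
          simp
        rw [Finset.sum_congr rfl inner, Finset.sum_const, Finset.card_range, smul_eq_mul]
    · -- column sums c
      intro p hp
      rw [Finset.mem_Icc, hm'] at hp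
      by_cases hlp : (p-1)%k ≤ 1
      · rw [pad1_le k _ _ c p hlp, hpadn, hn', sum_Icc_mul t k]
        have hip : 2*((p-1)/k)+1+(p-1)%k ∈ Finset.Icc 1 m := by
          have := div_lt' k u p hp.1 hp.2
          rw [Finset.mem_Icc]
          omega
        have hC := hcol _ hip
        rw [ht, mul_comm 2 t, sum_Icc_mul t 2] at hC
        have inner : ∀ b ∈ Finset.range t, (∑ l ∈ Finset.range k, fwdXi k ξ (p, k*b+1+l))
            = ξ (2*((p-1)/k)+1+(p-1)%k, 2*b+1+0) + ξ (2*((p-1)/k)+1+(p-1)%k, 2*b+1+1)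
              + (k-2)*1 := by
          intro b _
          rw [sum_split_tail_c k 1 hk (fun l => fwdXi k ξ (p, k*b+1+l))
            (fun y h2 hyk => by
              show fwdXi k ξ (p, k*b+1+y) = 1
              rw [fwdXi_eval2 k ξ p b y hyk, if_neg (by omega)])]
          show fwdXi k ξ (p, k*b+1+0) + fwdXi k ξ (p, k*b+1+1) + (k-2)*1 = _
          rw [fwdXi_eval2 k ξ p b 0 (by omega), fwdXi_eval2 k ξ p b 1 (by omega),
            if_pos ⟨hlp, by omega⟩, if_pos ⟨hlp, by omega⟩]
        rw [Finset.sum_congr rfl inner, Finset.sum_add_distrib, Finset.sum_add_distrib,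
          Finset.sum_const, Finset.card_range, smul_eq_mul]
        have hC2 : ∑ b ∈ Finset.range t, (ξ (2*((p-1)/k)+1+(p-1)%k, 2*b+1+0)
            + ξ (2*((p-1)/k)+1+(p-1)%k, 2*b+1+1)) = c (2*((p-1)/k)+1+(p-1)%k) := by
          rw [← hC]
          exact Finset.sum_congr rfl fun b _ => by
            rw [Finset.sum_range_succ, Finset.sum_range_succ, Finset.sum_range_zero, zero_add]
        rw [Finset.sum_add_distrib] at hC2
        simp only [mul_one]
        omega
      · rw [pad1_fill k _ _ c p (by omega), hn', sum_Icc_mul t k]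
        have inner : ∀ b ∈ Finset.range t, (∑ l ∈ Finset.range k, fwdXi k ξ (p, k*b+1+l)) = k := by
          intro b _
          rw [Finset.sum_congr rfl (fun y hy => by
            rw [fwdXi_eval2 k ξ p b y (Finset.mem_range.mp hy), if_neg (by omega)])]
          simp
        rw [Finset.sum_congr rfl inner, Finset.sum_const, Finset.card_range, smul_eq_mul]
    · -- block sums
      intro wpt hw
      have hbl := hblk wpt hw
      obtain ⟨a, b, rfl, ham, hbn⟩ := corner_decomp m n wpt hw
      have hbl' : (rel (2*a+1, 2*b+1)).holds (∑ z ∈ blockF 2 (2*a+1) (2*b+1), ξ z)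
          (v (2*a+1, 2*b+1)) := hbl
      have hsum : ∑ z ∈ blockF k (k*a+1) (k*b+1), fwdXi k ξ z
          = (∑ z ∈ blockF 2 (2*a+1) (2*b+1), ξ z) + (k^2-4) := by
        rw [sum_block k _ _ hk0, sum_block 2 _ _ (by norm_num)]
        have htail : ∀ x, 2 ≤ x → x < k →
            (∑ y ∈ Finset.range k, fwdXi k ξ (k*a+1+x, k*b+1+y)) = k := by
          intro x h2 hx
          rw [Finset.sum_congr rfl (fun y hy => by
            rw [fwdXi_eval k ξ a x b y hx (Finset.mem_range.mp hy), if_neg (by omega)])]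
          simp
        have hhead : ∀ x, x ≤ 1 → (∑ y ∈ Finset.range k, fwdXi k ξ (k*a+1+x, k*b+1+y))
            = ξ (2*a+1+x, 2*b+1+0) + ξ (2*a+1+x, 2*b+1+1) + (k-2)*1 := by
          intro x hx1
          have hx : x < k := by omega
          rw [sum_split_tail_c k 1 hk (fun y => fwdXi k ξ (k*a+1+x, k*b+1+y))
            (fun y h2 hyk => by
              show fwdXi k ξ (k*a+1+x, k*b+1+y) = 1
              rw [fwdXi_eval k ξ a x b y hx hyk, if_neg (by omega)])]
          show fwdXi k ξ (k*a+1+x, k*b+1+0) + fwdXi k ξ (k*a+1+x, k*b+1+1) + (k-2)*1 = _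
          rw [fwdXi_eval k ξ a x b 0 hx (by omega), fwdXi_eval k ξ a x b 1 hx (by omega),
            if_pos ⟨hx1, by omega⟩, if_pos ⟨hx1, by omega⟩]
        rw [sum_split_tail_c k k hk
          (fun x => ∑ y ∈ Finset.range k, fwdXi k ξ (k*a+1+x, k*b+1+y)) htail]
        show (∑ y ∈ Finset.range k, fwdXi k ξ (k*a+1+0, k*b+1+y))
          + (∑ y ∈ Finset.range k, fwdXi k ξ (k*a+1+1, k*b+1+y)) + (k-2)*k = _
        rw [hhead 0 (by omega), hhead 1 (by omega)]
        simp only [Finset.sum_range_succ, Finset.sum_range_zero, zero_add]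
        have := key4 k hk
        simp only [mul_one]
        omega
      rw [cornerMap_eval k a b]
      show (rel (2*a+1, 2*b+1)).holds (∑ z ∈ blockF k (k*a+1) (k*b+1), fwdXi k ξ z)
        (v (2*a+1, 2*b+1) + (k^2-4))
      rw [hsum]
      exact (holds_add (rel (2*a+1, 2*b+1)) _ _ _).mpr hbl'
  · rintro ⟨ξ', hb', hrow', hcol', hblk'⟩
    have hcard : ∀ N : ℕ, (Finset.Icc 1 N).card = N := fun N => by
      rw [Nat.card_Icc]; omega
    have hfullrow : ∀ p ∈ Finset.Icc 1 (m*k/2), 2 ≤ (p-1)%k →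
        ∀ q ∈ Finset.Icc 1 (n*k/2), ξ' (p, q) = 1 := by
      intro p hp h2
      have hs := hcol' p hp
      rw [pad1_fill k _ _ c p h2] at hs
      exact all_one _ (fun q => ξ' (p, q))
        (fun q hq => hb' (p, q) (Finset.mem_product.mpr ⟨hp, hq⟩))
        (by rw [hs, hcard])
    have hfullcol : ∀ q ∈ Finset.Icc 1 (n*k/2), 2 ≤ (q-1)%k →
        ∀ p ∈ Finset.Icc 1 (m*k/2), ξ' (p, q) = 1 := by
      intro q hq h2 p hp
      have hs := hrow' q hq
      rw [pad1_fill k _ _ r q h2] at hs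
      exact all_one _ (fun p => ξ' (p, q))
        (fun p' hp' => hb' (p', q) (Finset.mem_product.mpr ⟨hp', hq⟩))
        (by rw [hs, hcard]) p hp
    refine ⟨bwdXi k ξ', ?_, ?_, ?_, ?_⟩
    · -- bounds
      rintro ⟨p, q⟩ hp
      simp only [gridIcc, Finset.mem_product, Finset.mem_Icc] at hp
      obtain ⟨⟨hp1, hp2⟩, hq1, hq2⟩ := hp
      show ξ' (k*((p-1)/2)+1+(p-1)%2, k*((q-1)/2)+1+(q-1)%2) ≤ 1
      apply hb'
      have d1 : (p-1)/2 < u := div_lt' 2 u p hp1 (by omega)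
      have d2 : (q-1)/2 < t := div_lt' 2 t q hq1 (by omega)
      refine Finset.mem_product.mpr ⟨Finset.mem_Icc.mpr ⟨by omega, ?_⟩,
        Finset.mem_Icc.mpr ⟨by omega, ?_⟩⟩
      · rw [hm']; exact idx_le k u _ _ d1 (by omega)
      · rw [hn']; exact idx_le k t _ _ d2 (by omega)
    · -- row sums r
      intro j hj
      rw [Finset.mem_Icc] at hj
      obtain ⟨b, l, rfl, hl, hbt⟩ : ∃ b l, j = 2*b+1+l ∧ l ≤ 1 ∧ b < t :=
        ⟨(j-1)/2, (j-1)%2, by omega, by omega, by omega⟩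
      have hq'mem : k*b+1+l ∈ Finset.Icc 1 (n*k/2) := by
        rw [Finset.mem_Icc, hn']
        exact ⟨by omega, idx_le k t b l hbt (by omega)⟩
      have hs := hrow' _ hq'mem
      rw [pad1_le k _ _ r _ (by rw [md1' k b l (by omega)]; omega),
        md1' k b l (by omega), dv1' k b l (by omega), hpadm, hm', sum_Icc_mul u k] at hs
      have inner : ∀ a ∈ Finset.range u, (∑ x ∈ Finset.range k, ξ' (k*a+1+x, k*b+1+l))
          = ξ' (k*a+1+0, k*b+1+l) + ξ' (k*a+1+1, k*b+1+l) + (k-2)*1 := by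
        intro a ha
        rw [Finset.mem_range] at ha
        exact sum_split_tail_c k 1 hk (fun x => ξ' (k*a+1+x, k*b+1+l)) (fun x h2 hxk =>
          hfullrow (k*a+1+x)
            (by rw [Finset.mem_Icc, hm']; exact ⟨by omega, idx_le k u a x ha hxk⟩)
            (by rw [md1' k a x hxk]; omega) _ hq'mem)
      rw [Finset.sum_congr rfl inner, Finset.sum_add_distrib, Finset.sum_add_distrib,
        Finset.sum_const, Finset.card_range, smul_eq_mul] at hs
      rw [hu, mul_comm 2 u, sum_Icc_mul u 2]
      have inner2 : ∀ a ∈ Finset.range u, (∑ x ∈ Finset.range 2, bwdXi k ξ' (2*a+1+x, 2*b+1+l))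
          = ξ' (k*a+1+0, k*b+1+l) + ξ' (k*a+1+1, k*b+1+l) := by
        intro a _
        rw [Finset.sum_range_succ, Finset.sum_range_succ, Finset.sum_range_zero, zero_add,
          bwdXi_eval k ξ' a 0 b l (by omega) (by omega),
          bwdXi_eval k ξ' a 1 b l (by omega) (by omega)]
      rw [Finset.sum_congr rfl inner2, Finset.sum_add_distrib]
      simp only [mul_one] at hs
      omega
    · -- column sums c
      intro i hi
      rw [Finset.mem_Icc] at hi
      obtain ⟨a, l, rfl, hl, hau⟩ : ∃ a l, i = 2*a+1+l ∧ l ≤ 1 ∧ a < u :=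
        ⟨(i-1)/2, (i-1)%2, by omega, by omega, by omega⟩
      have hp'mem : k*a+1+l ∈ Finset.Icc 1 (m*k/2) := by
        rw [Finset.mem_Icc, hm']
        exact ⟨by omega, idx_le k u a l hau (by omega)⟩
      have hs := hcol' _ hp'mem
      rw [pad1_le k _ _ c _ (by rw [md1' k a l (by omega)]; omega),
        md1' k a l (by omega), dv1' k a l (by omega), hpadn, hn', sum_Icc_mul t k] at hs
      have inner : ∀ b ∈ Finset.range t, (∑ y ∈ Finset.range k, ξ' (k*a+1+l, k*b+1+y))
          = ξ' (k*a+1+l, k*b+1+0) + ξ' (k*a+1+l, k*b+1+1) + (k-2)*1 := by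
        intro b hb2
        rw [Finset.mem_range] at hb2
        exact sum_split_tail_c k 1 hk (fun y => ξ' (k*a+1+l, k*b+1+y)) (fun y h2 hyk =>
          hfullcol (k*b+1+y)
            (by rw [Finset.mem_Icc, hn']; exact ⟨by omega, idx_le k t b y hb2 hyk⟩)
            (by rw [md1' k b y hyk]; omega) _ hp'mem)
      rw [Finset.sum_congr rfl inner, Finset.sum_add_distrib, Finset.sum_add_distrib,
        Finset.sum_const, Finset.card_range, smul_eq_mul] at hs
      rw [ht, mul_comm 2 t, sum_Icc_mul t 2]
      have inner2 : ∀ b ∈ Finset.range t, (∑ y ∈ Finset.range 2, bwdXi k ξ' (2*a+1+l, 2*b+1+y))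
          = ξ' (k*a+1+l, k*b+1+0) + ξ' (k*a+1+l, k*b+1+1) := by
        intro b _
        rw [Finset.sum_range_succ, Finset.sum_range_succ, Finset.sum_range_zero, zero_add,
          bwdXi_eval k ξ' a l b 0 (by omega) (by omega),
          bwdXi_eval k ξ' a l b 1 (by omega) (by omega)]
      rw [Finset.sum_congr rfl inner2, Finset.sum_add_distrib]
      simp only [mul_one] at hs
      omega
    · -- block sums
      intro wpt hw
      have hbl := hblk' wpt hw
      obtain ⟨a, b, rfl, ham, hbn⟩ := corner_decomp m n wpt hw
      have hau : a < u := by omega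
      have hbt : b < t := by omega
      rw [cornerMap_eval k a b] at hbl
      have hbl' : (rel (2*a+1, 2*b+1)).holds (∑ z ∈ blockF k (k*a+1) (k*b+1), ξ' z)
          (v (2*a+1, 2*b+1) + (k^2-4)) := hbl
      have hsum : ∑ z ∈ blockF k (k*a+1) (k*b+1), ξ' z
          = (∑ z ∈ blockF 2 (2*a+1) (2*b+1), bwdXi k ξ' z) + (k^2-4) := by
        rw [sum_block k _ _ hk0, sum_block 2 _ _ (by norm_num)]
        have htail : ∀ x, 2 ≤ x → x < k →
            (∑ y ∈ Finset.range k, ξ' (k*a+1+x, k*b+1+y)) = k := by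
          intro x h2 hx
          rw [Finset.sum_congr rfl (fun y hy =>
            hfullrow (k*a+1+x)
              (by rw [Finset.mem_Icc, hm']; exact ⟨by omega, idx_le k u a x hau hx⟩)
              (by rw [md1' k a x hx]; omega) (k*b+1+y)
              (by rw [Finset.mem_Icc, hn'];
                  exact ⟨by omega, idx_le k t b y hbt (Finset.mem_range.mp hy)⟩))]
          simp
        have hhead : ∀ x, x ≤ 1 → (∑ y ∈ Finset.range k, ξ' (k*a+1+x, k*b+1+y))
            = ξ' (k*a+1+x, k*b+1+0) + ξ' (k*a+1+x, k*b+1+1) + (k-2)*1 := by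
          intro x hx1
          have hx : x < k := by omega
          exact sum_split_tail_c k 1 hk (fun y => ξ' (k*a+1+x, k*b+1+y)) (fun y h2 hyk =>
            hfullcol (k*b+1+y)
              (by rw [Finset.mem_Icc, hn']; exact ⟨by omega, idx_le k t b y hbt hyk⟩)
              (by rw [md1' k b y hyk]; omega) (k*a+1+x)
              (by rw [Finset.mem_Icc, hm']; exact ⟨by omega, idx_le k u a x hau hx⟩))
        rw [sum_split_tail_c k k hk
          (fun x => ∑ y ∈ Finset.range k, ξ' (k*a+1+x, k*b+1+y)) htail]
        show (∑ y ∈ Finset.range k, ξ' (k*a+1+0, k*b+1+y))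
          + (∑ y ∈ Finset.range k, ξ' (k*a+1+1, k*b+1+y)) + (k-2)*k = _
        rw [hhead 0 (by omega), hhead 1 (by omega)]
        have inner2 : ∀ x ∈ Finset.range 2, (∑ y ∈ Finset.range 2, bwdXi k ξ' (2*a+1+x, 2*b+1+y))
            = ξ' (k*a+1+x, k*b+1+0) + ξ' (k*a+1+x, k*b+1+1) := by
          intro x hx
          rw [Finset.mem_range] at hx
          rw [Finset.sum_range_succ, Finset.sum_range_succ, Finset.sum_range_zero, zero_add,
            bwdXi_eval k ξ' a x b 0 hx (by omega), bwdXi_eval k ξ' a x b 1 hx (by omega)]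
        rw [Finset.sum_congr rfl inner2, Finset.sum_range_succ, Finset.sum_range_succ,
          Finset.sum_range_zero, zero_add]
        have := key4 k hk
        simp only [mul_one]
        omega
      rw [hsum] at hbl'
      exact (holds_add (rel (2*a+1, 2*b+1)) _ _ _).mp hbl'
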